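/- arXiv:0909.2143 — 5 statements merged into one kernel-verified Lean document; each statement's English description precedes it below -/
import Mathlib

section
/- Let X be a simplicial set, y a q-simplex of X, α : [p] → [q] a surjective morphism in the simplex category, and x = X(α)(y). Then the number of indices i with 0 ≤ i ≤ p−1 such that the elementary edge X(φ(i,i+1))(x) is non-degenerate is at most q, where φ(i,i+1) : [1] → [p] is the morphism sending 0 ↦ i and 1 ↦ i+1. -/
open CategoryTheory Simplicial MonoidalCategory SSet Limits

universe u v

/-- A simplex is degenerate if it is the image of a degeneracy map. -/
def SDeg (X : SSet.{u}) : ∀ {n : ℕ}, X _⦋n⦌ → Prop := fun {n} x =>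
  match n, x with
  | 0, _ => False
  | n + 1, x => ∃ (i : Fin (n + 1)) (y : X _⦋n⦌), x = X.map (SimplexCategory.σ i).op y

/-- The `i`-th elementary edge `X(φ(i,i+1))(x)` of a `p`-simplex `x`. -/
def elemEdge (X : SSet.{u}) {p : ℕ} (x : X _⦋p⦌) (i : Fin p) : X _⦋1⦌ :=
  X.map (SimplexCategory.mkOfLe i.castSucc i.succ (Fin.castSucc_lt_succ (i := i)).le).op x

/-- A simplicial set is regular (property `P_1`) if any simplex with a degenerate
`i`-th elementary edge is an `i`-th degeneracy. -/
def SReg (X : SSet.{u}) : Prop :=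
  ∀ (p : ℕ) (x : X _⦋p + 1⦌) (i : Fin (p + 1)),
    SDeg X (elemEdge X x i) → ∃ y : X _⦋p⦌, x = X.map (SimplexCategory.σ i).op y

/-- If `x = X(α)(y)` for a surjection `α : [p] ⟶ [q]`, then at most `q` of the
elementary edges of `x` are non-degenerate. -/
theorem stmt_0 (X : SSet.{u}) (p q : ℕ) (α : (⦋p⦌ : SimplexCategory) ⟶ ⦋q⦌)
    (hα : Function.Surjective α.toOrderHom) (y : X _⦋q⦌) (x : X _⦋p⦌)
    (hx : x = X.map α.op y) :
    Nat.card {i : Fin p // ¬ SDeg X (elemEdge X x i)} ≤ q := by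
  -- key: a non-degenerate elementary edge forces a strict increase of α
  have key : ∀ i : Fin p, ¬ SDeg X (elemEdge X x i) →
      α.toOrderHom i.castSucc < α.toOrderHom i.succ := by
    intro i h
    by_contra hlt
    have heq : α.toOrderHom i.castSucc = α.toOrderHom i.succ :=
      le_antisymm (α.toOrderHom.monotone (Fin.castSucc_lt_succ (i := i)).le) (not_lt.mp hlt)
    apply h
    have hcomp : (SimplexCategory.mkOfLe i.castSucc i.succ (Fin.castSucc_lt_succ (i := i)).le) ≫ α =
        SimplexCategory.σ (0 : Fin 1) ≫
          SimplexCategory.const ⦋0⦌ ⦋q⦌ (α.toOrderHom i.castSucc) := by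
      apply SimplexCategory.Hom.ext
      ext j
      fin_cases j <;>
        simp [SimplexCategory.mkOfLe, SimplexCategory.σ] <;> first | rfl | exact congrArg Fin.val heq.symm
    refine ⟨0, X.map (SimplexCategory.const ⦋0⦌ ⦋q⦌ (α.toOrderHom i.castSucc)).op y, ?_⟩
    rw [elemEdge, hx, ← FunctorToTypes.map_comp_apply, ← op_comp, hcomp, op_comp,
      FunctorToTypes.map_comp_apply]
  -- injective map into Fin q
  have h0 : ∀ i : Fin p, ¬ SDeg X (elemEdge X x i) → α.toOrderHom i.succ ≠ 0 := by
    intro i h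
    exact Fin.ne_of_gt (lt_of_le_of_lt (Fin.zero_le _) (key i h))
  have hinj : Function.Injective (fun i : {i : Fin p // ¬ SDeg X (elemEdge X x i)} =>
      (α.toOrderHom i.1.succ).pred (h0 i.1 i.2)) := by
    rintro ⟨i, hi⟩ ⟨j, hj⟩ hij
    have hval : α.toOrderHom i.succ = α.toOrderHom j.succ := Fin.pred_inj.mp hij
    rcases lt_trichotomy i j with h | h | h
    · exfalso
      have : i.succ ≤ j.castSucc := by
        rw [Fin.succ_le_castSucc_iff]; exact h
      have := lt_of_le_of_lt (α.toOrderHom.monotone this) (key j hj)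
      rw [hval] at this
      exact lt_irrefl _ this
    · exact Subtype.ext h
    · exfalso
      have : j.succ ≤ i.castSucc := by
        rw [Fin.succ_le_castSucc_iff]; exact h
      have := lt_of_le_of_lt (α.toOrderHom.monotone this) (key i hi)
      rw [hval] at this
      exact lt_irrefl _ this
  calc Nat.card {i : Fin p // ¬ SDeg X (elemEdge X x i)}
      ≤ Nat.card (Fin q) := Nat.card_le_card_of_injective _ hinj
    _ = q := by simp
end

section
/- Every strongly regular simplicial set satisfies property P_r for every r > 0. In particular, every strongly regular simplicial set is regular. -/
open CategoryTheory Simplicial MonoidalCategory SSet Limits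

universe u v

/-- A simplicial set is strongly regular if all faces of non-degenerate simplices
are non-degenerate. -/
def SStrongReg (X : SSet.{u}) : Prop :=
  ∀ (p : ℕ) (x : X _⦋p + 1⦌), ¬ SDeg X x →
    ∀ i : Fin (p + 2), ¬ SDeg X (X.map (SimplexCategory.δ i).op x)

/-- The morphism `σ_i ∘ σ_{i+1} ∘ ⋯ ∘ σ_{i+r-1} : [m+r] ⟶ [m]` of the simplex category,
collapsing `{i, …, i+r}` to `i` (for `i ≤ m`). -/
def collapseHom (m i r : ℕ) : (⦋m + r⦌ : SimplexCategory) ⟶ ⦋m⦌ :=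
  SimplexCategory.mkHom
    ⟨fun j => ⟨max (j.1 - r) (min j.1 (min i m)), by have := j.2; omega⟩,
     fun a b h => by
       have h' : (a : ℕ) ≤ b := h
       simp only [Fin.mk_le_mk]; omega⟩

/-- Property `P_r`: if the edge `X(φ(i,i+r))(x)` is degenerate then
`x = s_{i+r-1} ⋯ s_i y` for some `y`. -/
def SPropR (X : SSet.{u}) (r : ℕ) : Prop :=
  ∀ (m i : ℕ) (_hi : i ≤ m) (x : X _⦋m + r⦌),
    SDeg X (X.map (SimplexCategory.mkOfLe (⟨i, by omega⟩ : Fin (m + r + 1)) ⟨i + r, by omega⟩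
      (Fin.mk_le_mk.mpr (by omega))).op x) →
    ∃ y : X _⦋m⦌, x = X.map (collapseHom m i r).op y

/-- Every simplex is the image of a non-degenerate simplex under some map. -/
lemma exists_nondeg (X : SSet.{u}) : ∀ (n : ℕ) (x : X _⦋n⦌),
    ∃ (k : ℕ) (α : ((⦋n⦌ : SimplexCategory)) ⟶ ⦋k⦌) (y : X _⦋k⦌),
      ¬ SDeg X y ∧ x = X.map α.op y := by
  intro n
  induction n with
  | zero => intro x; exact ⟨0, 𝟙 _, x, fun h => h, by simp⟩
  | succ n ih =>
    intro x
    by_cases hx : SDeg X x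
    · obtain ⟨i, z, rfl⟩ := hx
      obtain ⟨k, α, y, hy, rfl⟩ := ih z
      refine ⟨k, SimplexCategory.σ i ≫ α, y, hy, ?_⟩
      rw [op_comp, FunctorToTypes.map_comp_apply]
    · exact ⟨n + 1, 𝟙 _, x, hx, by simp⟩

/-- In a strongly regular simplicial set, images of non-degenerate simplices under
injective maps are non-degenerate. -/
lemma nondeg_map_of_injective (X : SSet.{u}) (hX : SStrongReg X) :
    ∀ (n k : ℕ) (f : ((⦋k⦌ : SimplexCategory)) ⟶ ⦋n⦌)
      (_hf : Function.Injective f.toOrderHom) (y : X _⦋n⦌),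
      ¬ SDeg X y → ¬ SDeg X (X.map f.op y) := by
  intro n
  induction n with
  | zero =>
    intro k f hf y _hy
    obtain rfl : k = 0 := by
      have h0 : f.toOrderHom 0 = f.toOrderHom (Fin.last k) := by
        apply Fin.ext
        have hc : (⦋0⦌ : SimplexCategory).len = 0 := rfl
        have h1 := (f.toOrderHom 0).isLt
        have h2 := (f.toOrderHom (Fin.last k)).isLt
        omega
      have := congrArg Fin.val (hf h0)
      simpa using this.symm
    exact fun h => h
  | succ n ih =>
    intro k f hf y hy
    by_cases hsurj : Function.Surjective f.toOrderHom
    · obtain rfl : k = n + 1 := by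
        have h1 := Fintype.card_le_of_surjective _ hsurj
        have h2 := Fintype.card_le_of_injective _ hf
        simp [SimplexCategory.len_mk] at h1 h2
        omega
      have : Mono f := SimplexCategory.mono_iff_injective.mpr hf
      rw [SimplexCategory.eq_id_of_mono f]
      simpa using hy
    · obtain ⟨j, f', rfl⟩ := SimplexCategory.eq_comp_δ_of_not_surjective f hsurj
      have hf' : Function.Injective f'.toOrderHom := by
        intro a b hab
        apply hf
        rw [SimplexCategory.comp_toOrderHom]
        exact congrArg (⇑(SimplexCategory.δ j).toOrderHom) hab
      rw [op_comp, FunctorToTypes.map_comp_apply]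
      exact ih k f' hf' _ (hX n y hy j)

/-- The section of `collapseHom` induced by a map constant on `{i, …, i+r}`. -/
def liftHom {k : ℕ} (m i r : ℕ) (α : (⦋m + r⦌ : SimplexCategory) ⟶ ⦋k⦌) :
    (⦋m⦌ : SimplexCategory) ⟶ ⦋k⦌ :=
  SimplexCategory.mkHom
    ⟨fun j => α.toOrderHom ⟨if j.1 ≤ i then j.1 else j.1 + r,
       by simp only [SimplexCategory.len_mk]; have := j.2; split <;> omega⟩,
     fun a b h => by
       have h' : (a : ℕ) ≤ b := h
       exact α.toOrderHom.monotone (Fin.mk_le_mk.mpr (by split <;> split <;> omega))⟩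

lemma collapse_comp {k m i r : ℕ} (hi : i ≤ m) (α : (⦋m + r⦌ : SimplexCategory) ⟶ ⦋k⦌)
    (hα : α.toOrderHom ⟨i, by simp only [SimplexCategory.len_mk]; omega⟩
        = α.toOrderHom ⟨i + r, by simp only [SimplexCategory.len_mk]; omega⟩) :
    collapseHom m i r ≫ liftHom m i r α = α := by
  apply SimplexCategory.Hom.ext'
  apply OrderHom.ext
  funext j
  have hj : (j : ℕ) < m + r + 1 := j.2
  have key : ∀ (c : ℕ) (hc : c < m + r + 1),
      (c = j.1 ∨ (c = i ∧ i ≤ j.1 ∧ j.1 ≤ i + r)) →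
      α.toOrderHom ⟨c, hc⟩ = α.toOrderHom j := by
    rintro c hc (rfl | ⟨rfl, h1, h2⟩)
    · exact congrArg _ (Fin.ext rfl)
    · apply le_antisymm
      · exact α.toOrderHom.monotone (by rw [Fin.le_def]; exact h1)
      · rw [hα]
        exact α.toOrderHom.monotone (by rw [Fin.le_def]; exact h2)
  have he : (collapseHom m i r ≫ liftHom m i r α).toOrderHom j
      = α.toOrderHom ⟨if (max (j.1 - r) (min j.1 (min i m))) ≤ i
          then (max (j.1 - r) (min j.1 (min i m)))
          else (max (j.1 - r) (min j.1 (min i m))) + r, by split <;> omega⟩ := rfl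
  rw [he]
  by_cases h1 : j.1 ≤ i
  · exact key _ _ (Or.inl (by split <;> omega))
  · by_cases h2 : j.1 ≤ i + r
    · exact key _ _ (Or.inr ⟨by split <;> omega, by omega, h2⟩)
    · exact key _ _ (Or.inl (by split <;> omega))

/-- Strongly regular simplicial sets satisfy `P_r` for every `r`. -/
lemma strongReg_propR (X : SSet.{u}) (hX : SStrongReg X) (r : ℕ) : SPropR X r := by
  intro m i hi x hdeg
  obtain ⟨k, α, y, hy, rfl⟩ := exists_nondeg X (m + r) x
  rw [← FunctorToTypes.map_comp_apply, ← op_comp] at hdeg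
  have hα : α.toOrderHom ⟨i, by simp only [SimplexCategory.len_mk]; omega⟩
      = α.toOrderHom ⟨i + r, by simp only [SimplexCategory.len_mk]; omega⟩ := by
    by_contra hne
    refine nondeg_map_of_injective X hX k 1 _ ?_ y hy hdeg
    intro a b hab
    fin_cases a <;> fin_cases b <;>
      first
        | rfl
        | exact absurd hab hne
        | exact absurd hab.symm hne
  refine ⟨X.map (liftHom m i r α).op y, ?_⟩
  rw [← FunctorToTypes.map_comp_apply, ← op_comp, collapse_comp hi α hα]

lemma collapseHom_one (p : ℕ) (i : Fin (p + 1)) :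
    collapseHom p i.1 1 = SimplexCategory.σ i := by
  apply SimplexCategory.Hom.ext'
  apply OrderHom.ext
  funext j
  apply Fin.ext
  have hj : (j : ℕ) < p + 1 + 1 := j.2
  have hi : (i : ℕ) < p + 1 := i.2
  have h1 : ((collapseHom p i.1 1).toOrderHom j : ℕ)
      = max (j.1 - 1) (min j.1 (min i.1 p)) := rfl
  rw [h1]
  have h2 : ((SimplexCategory.σ i).toOrderHom j) = i.predAbove j := rfl
  rw [h2]
  unfold Fin.predAbove
  split_ifs with h
  · have h' : (i : ℕ) < (j : ℕ) := by rw [Fin.lt_def] at h; simpa using h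
    rw [Fin.coe_pred]
    omega
  · have h' : ¬ (i : ℕ) < (j : ℕ) := by rw [Fin.lt_def] at h; simpa using h
    rw [Fin.coe_castPred]
    omega

/-- A strongly regular simplicial set satisfies `P_r` for all `r > 0`;
in particular it is regular. -/
theorem stmt_4 (X : SSet.{u}) (hX : SStrongReg X) :
    (∀ r : ℕ, 0 < r → SPropR X r) ∧ SReg X := by
  refine ⟨fun r _ => strongReg_propR X hX r, ?_⟩
  intro p x i hdeg
  obtain ⟨y, hy⟩ := strongReg_propR X hX 1 p i.1 (Nat.lt_succ_iff.mp i.2) x hdeg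
  exact ⟨y, by rwa [collapseHom_one p i] at hy⟩
end

section
/- If a simplicial set X satisfies both property P_1 and property P_2, then X is strongly regular, i.e. every face of every non-degenerate simplex of X is non-degenerate. -/
open CategoryTheory Simplicial MonoidalCategory SSet Limits

universe u v

section Aux

open SimplexCategory

lemma aux_sigma_apply (n : ℕ) (i : Fin (n+1)) (j : Fin (n+2)) :
    ((SimplexCategory.σ i).toOrderHom j : ℕ) =
      if (i:ℕ) < (j:ℕ) then (j:ℕ) - 1 else (j:ℕ) := by
  change (i.predAbove j : ℕ) = _
  rw [Fin.predAbove]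
  split
  case isTrue h =>
    rw [Fin.coe_pred, if_pos (by simpa [Fin.lt_def] using h)]
  case isFalse h =>
    rw [Fin.coe_castPred, if_neg (by simpa [Fin.lt_def] using h)]

lemma aux_delta_apply (n : ℕ) (i : Fin (n+2)) (j : Fin (n+1)) :
    ((SimplexCategory.δ i).toOrderHom j : ℕ) =
      if (j:ℕ) < (i:ℕ) then (j:ℕ) else (j:ℕ)+1 := by
  change (i.succAbove j : ℕ) = _
  rw [Fin.succAbove]
  split
  case isTrue h =>
    rw [Fin.coe_castSucc, if_pos (by simpa [Fin.lt_def] using h)]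
  case isFalse h =>
    rw [Fin.val_succ, if_neg (by simpa [Fin.lt_def] using h)]

lemma aux_collapse1_eq (m i : ℕ) (hi : i ≤ m) :
    collapseHom m i 1 = SimplexCategory.σ ⟨i, by omega⟩ := by
  apply Hom.ext; apply OrderHom.ext; funext j; apply Fin.ext
  show (max (j.1 - 1) (min j.1 (min i m))) = _
  rw [aux_sigma_apply]
  simp only [Fin.val_mk]
  have := j.2
  split <;> omega

lemma aux_collapse2_eq (m i : ℕ) (hi : i ≤ m) :
    collapseHom m i 2 = (SimplexCategory.σ (⟨i+1, by omega⟩ : Fin (m+2))) ≫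
      SimplexCategory.σ ⟨i, by omega⟩ := by
  apply Hom.ext; apply OrderHom.ext; funext j; apply Fin.ext
  show (max (j.1 - 2) (min j.1 (min i m))) =
    (((SimplexCategory.σ (⟨i, by omega⟩ : Fin (m+1))).toOrderHom
      ((SimplexCategory.σ (⟨i+1, by omega⟩ : Fin (m+2))).toOrderHom j)) : ℕ)
  simp only [aux_sigma_apply, Fin.val_mk]
  have := j.2
  split_ifs <;> omega

lemma aux_edge_comp {n m : ℕ} (a b : Fin (n+1)) (h : a ≤ b) (g : (⦋n⦌:SimplexCategory) ⟶ ⦋m⦌) :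
    mkOfLe a b h ≫ g = mkOfLe (g.toOrderHom a) (g.toOrderHom b) (g.toOrderHom.monotone h) :=
  Hom.ext_one_left _ _ rfl rfl

lemma aux_collapse_edge {n : ℕ} (j : Fin (n+1)) :
    SimplexCategory.mkOfLe j.castSucc j.succ (Fin.castSucc_lt_succ (i := j)).le ≫ SimplexCategory.σ j
      = SimplexCategory.mkOfLe j j le_rfl := by
  rw [aux_edge_comp]
  apply Hom.ext_one_left
  · show (SimplexCategory.σ j).toOrderHom j.castSucc = j
    apply Fin.ext
    rw [aux_sigma_apply]
    simp
  · show (SimplexCategory.σ j).toOrderHom j.succ = j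
    apply Fin.ext
    rw [aux_sigma_apply]
    simp

/-- The constant edge at `c` of any simplex is degenerate. -/
lemma aux_edge_deg (X : SSet.{u}) {n : ℕ} (c : Fin (n+1)) (y : X _⦋n⦌) :
    SDeg X (X.map (SimplexCategory.mkOfLe c c le_rfl).op y) := by
  refine ⟨0, X.map (SimplexCategory.const ⦋0⦌ ⦋n⦌ c).op y, ?_⟩
  rw [← FunctorToTypes.map_comp_apply, ← op_comp]
  have : SimplexCategory.mkOfLe c c le_rfl
      = SimplexCategory.σ (0 : Fin 1) ≫ SimplexCategory.const ⦋0⦌ ⦋n⦌ c :=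
    Hom.ext_one_left _ _ rfl rfl
  rw [this]

/-- The `(a,b)`-edge of `x` is the pullback along `δ i` of the `(j,j+1)`-edge. -/
lemma aux_edge_delta (q : ℕ) (i : Fin (q+3)) (j : Fin (q+1)) (a b : ℕ)
    (ha : a < q+3) (hb : b < q+3) (hab : a ≤ b)
    (h0 : ((SimplexCategory.δ i).toOrderHom j.castSucc : ℕ) = a)
    (h1 : ((SimplexCategory.δ i).toOrderHom j.succ : ℕ) = b) :
    SimplexCategory.mkOfLe (⟨a, ha⟩ : Fin (q+3)) ⟨b, hb⟩ (Fin.mk_le_mk.mpr hab) =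
      SimplexCategory.mkOfLe j.castSucc j.succ (Fin.castSucc_lt_succ (i := j)).le ≫
        SimplexCategory.δ i := by
  rw [aux_edge_comp]
  apply Hom.ext_one_left
  · exact Fin.ext h0.symm
  · exact Fin.ext h1.symm

lemma aux_edge_of_face_deg (X : SSet.{u}) (q : ℕ) (i : Fin (q+3)) (j : Fin (q+1))
    (x : X _⦋q+2⦌) (y : X _⦋q⦌)
    (hy : X.map (SimplexCategory.δ i).op x = X.map (SimplexCategory.σ j).op y)
    (a b : ℕ) (ha : a < q+3) (hb : b < q+3) (hab : a ≤ b)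
    (h0 : ((SimplexCategory.δ i).toOrderHom j.castSucc : ℕ) = a)
    (h1 : ((SimplexCategory.δ i).toOrderHom j.succ : ℕ) = b) :
    SDeg X (X.map (SimplexCategory.mkOfLe (⟨a, ha⟩ : Fin (q+3)) ⟨b, hb⟩
      (Fin.mk_le_mk.mpr hab)).op x) := by
  rw [aux_edge_delta q i j a b ha hb hab h0 h1, op_comp, FunctorToTypes.map_comp_apply, hy,
    ← FunctorToTypes.map_comp_apply, ← op_comp, aux_collapse_edge]
  exact aux_edge_deg X j y

end Aux

/-- A simplicial set satisfying `P_1` and `P_2` is strongly regular. -/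
theorem stmt_5 (X : SSet.{u}) (h1 : SPropR X 1) (h2 : SPropR X 2) :
    SStrongReg X := by
  intro p x hx i hdeg
  cases p with
  | zero => exact hdeg
  | succ q =>
    obtain ⟨j, y, hy⟩ := hdeg
    have hj := j.2
    by_cases hij : (i:ℕ) ≤ (j:ℕ)
    · -- edge (j+1, j+2) of x is degenerate
      have hdeg' : SDeg X (X.map (SimplexCategory.mkOfLe
          (⟨(j:ℕ)+1, by omega⟩ : Fin (q+1+1+1)) ⟨(j:ℕ)+1+1, by omega⟩
          (Fin.mk_le_mk.mpr (by omega))).op x) := by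
        apply aux_edge_of_face_deg X q i j x y hy
        · omega
        · rw [aux_delta_apply, Fin.coe_castSucc, if_neg (by omega)]
        · rw [aux_delta_apply, Fin.val_succ, if_neg (by omega)]
      obtain ⟨y', hy'⟩ := h1 (q+1) ((j:ℕ)+1) (by omega) x hdeg'
      exact hx ⟨⟨(j:ℕ)+1, by omega⟩, y', by
        rw [hy', aux_collapse1_eq (q+1) ((j:ℕ)+1) (by omega)]⟩
    · by_cases hij2 : (i:ℕ) = (j:ℕ)+1
      · -- edge (j, j+2) of x is degenerate
        have hdeg' : SDeg X (X.map (SimplexCategory.mkOfLe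
            (⟨(j:ℕ), by omega⟩ : Fin (q+2+1)) ⟨(j:ℕ)+2, by omega⟩
            (Fin.mk_le_mk.mpr (by omega))).op x) := by
          apply aux_edge_of_face_deg X q i j x y hy
          · omega
          · rw [aux_delta_apply, Fin.coe_castSucc, if_pos (by omega)]
          · rw [aux_delta_apply, Fin.val_succ, if_neg (by omega)]
        obtain ⟨y', hy'⟩ := h2 q (j:ℕ) (by omega) x hdeg'
        exact hx ⟨⟨(j:ℕ)+1, by omega⟩, X.map (SimplexCategory.σ ⟨(j:ℕ), by omega⟩).op y', by
          rw [hy', aux_collapse2_eq q (j:ℕ) (by omega), op_comp,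
            FunctorToTypes.map_comp_apply]⟩
      · -- i ≥ j + 2 : edge (j, j+1) of x is degenerate
        have hdeg' : SDeg X (X.map (SimplexCategory.mkOfLe
            (⟨(j:ℕ), by omega⟩ : Fin (q+1+1+1)) ⟨(j:ℕ)+1, by omega⟩
            (Fin.mk_le_mk.mpr (by omega))).op x) := by
          apply aux_edge_of_face_deg X q i j x y hy
          · omega
          · rw [aux_delta_apply, Fin.coe_castSucc, if_pos (by omega)]
          · rw [aux_delta_apply, Fin.val_succ, if_pos (by omega)]
        obtain ⟨y', hy'⟩ := h1 (q+1) (j:ℕ) (by omega) x hdeg'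
        exact hx ⟨⟨(j:ℕ), by omega⟩, y', by
          rw [hy', aux_collapse1_eq (q+1) (j:ℕ) (by omega)]⟩
end

section
/- For a simplicial set X, the following are equivalent: (i) X is regular (satisfies P_1); (ii) every elementary edge of every non-degenerate simplex of X is non-degenerate; (iii) a simplex x of X is non-degenerate if and only if all of its elementary edges are non-degenerate. -/
open CategoryTheory Simplicial MonoidalCategory SSet Limits

universe u v

lemma sigma_val {n : ℕ} (j : Fin (n + 1)) (k : Fin (n + 2)) :
    (((SimplexCategory.σ j).toOrderHom k : ℕ)) =
      if (k : ℕ) ≤ (j : ℕ) then (k : ℕ) else (k : ℕ) - 1 := by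
  show ((j.predAbove k : Fin _) : ℕ) = _
  unfold Fin.predAbove
  by_cases h : (k : ℕ) ≤ (j : ℕ)
  · have h1 : ¬ j.castSucc < k := fun h' => by
      have := Fin.lt_def.mp h'; change (j : ℕ) < (k : ℕ) at this; omega
    rw [dif_neg h1, if_pos h]; rfl
  · have h1 : j.castSucc < k := Fin.lt_def.mpr (by change (j : ℕ) < (k : ℕ); omega)
    rw [dif_pos h1, if_neg h]; rfl

lemma comp_mkOfLe {b n : ℕ} (g : (⦋n⦌ : SimplexCategory) ⟶ ⦋b⦌) (u' v' : Fin (n + 1))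
    (h' : u' ≤ v') (u v : Fin (b + 1)) (huv : u ≤ v)
    (hu : g.toOrderHom u' = u) (hv : g.toOrderHom v' = v) :
    SimplexCategory.mkOfLe u' v' h' ≫ g = SimplexCategory.mkOfLe u v huv := by
  ext x : 3
  fin_cases x
  · exact hu
  · exact hv

lemma elemEdge_map (X : SSet.{u}) {n b : ℕ} (g : (⦋n⦌ : SimplexCategory) ⟶ ⦋b⦌)
    (x : X _⦋b⦌) (i : Fin n) (u v : Fin (b + 1)) (huv : u ≤ v)
    (hu : g.toOrderHom i.castSucc = u) (hv : g.toOrderHom i.succ = v) :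
    elemEdge X (X.map g.op x) i = X.map (SimplexCategory.mkOfLe u v huv).op x := by
  dsimp [elemEdge]
  rw [← FunctorToTypes.map_comp_apply, ← op_comp,
    comp_mkOfLe g _ _ _ u v huv hu hv]

lemma const_edge_deg (X : SSet.{u}) {b : ℕ} (x : X _⦋b⦌) (a : Fin (b + 1)) (h : a ≤ a) :
    SDeg X (X.map (SimplexCategory.mkOfLe a a h).op x) := by
  refine ⟨0, X.map (SimplexCategory.const ⦋0⦌ ⦋b⦌ a).op x, ?_⟩
  rw [← FunctorToTypes.map_comp_apply, ← op_comp]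
  have heq : SimplexCategory.mkOfLe a a h =
      SimplexCategory.σ (0 : Fin 1) ≫ SimplexCategory.const ⦋0⦌ ⦋b⦌ a := by
    ext z : 3
    fin_cases z <;> rfl
  rw [heq]

/-- elemEdge of a 1-simplex at index 0 is the simplex itself. -/
lemma elemEdge_one (X : SSet.{u}) (x : X _⦋1⦌) (i : Fin 1) : elemEdge X x i = x := by
  obtain rfl : i = 0 := Fin.ext (by have := i.isLt; omega)
  have heq : SimplexCategory.mkOfLe ((0 : Fin 1)).castSucc ((0 : Fin 1)).succ
      (Fin.castSucc_lt_succ (i := (0 : Fin 1))).le = 𝟙 (⦋1⦌ : SimplexCategory) := by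
    ext z : 3
    fin_cases z <;> rfl
  show X.map (SimplexCategory.mkOfLe _ _ _).op x = x
  rw [heq, op_id, FunctorToTypes.map_id_apply]

/-- The key inductive lemma: (ii) implies regularity. -/
lemma key_lemma (X : SSet.{u})
    (h2 : ∀ (p : ℕ) (x : X _⦋p⦌), ¬ SDeg X x → ∀ i : Fin p, ¬ SDeg X (elemEdge X x i)) :
    SReg X := by
  intro p
  induction p with
  | zero =>
    intro x i hdeg
    rw [elemEdge_one X x i] at hdeg
    obtain ⟨j, y, hy⟩ := hdeg
    obtain rfl : j = i := by
      have : Subsingleton (Fin (0 + 1)) := Fin.subsingleton_one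
      exact Subsingleton.elim j i
    exact ⟨y, hy⟩
  | succ p IH =>
    intro x i hdeg
    by_cases hx : SDeg X x
    swap
    · exact absurd hdeg (h2 _ x hx i)
    obtain ⟨j, y, rfl⟩ := hx
    rcases lt_trichotomy (i : ℕ) (j : ℕ) with hij | hij | hij
    · -- i < j
      have hiL : i ≠ Fin.last _ := by
        intro h
        rw [h] at hij
        have := j.isLt
        simp only [Fin.val_last] at hij
        omega
      have hj0 : j ≠ 0 := by
        intro h; rw [h] at hij; simp only [Fin.val_zero] at hij; omega
      set i' := i.castPred hiL with hi'
      set j' := j.pred hj0 with hj'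
      have hu : (SimplexCategory.σ j).toOrderHom i.castSucc = i'.castSucc := by
        apply Fin.ext
        rw [sigma_val]
        simp only [Fin.coe_castSucc, hi', Fin.coe_castPred]
        split_ifs <;> omega
      have hv : (SimplexCategory.σ j).toOrderHom i.succ = i'.succ := by
        apply Fin.ext
        rw [sigma_val]
        simp only [Fin.coe_castSucc, Fin.val_succ, hi', Fin.coe_castPred]
        split_ifs <;> omega
      have hedge : elemEdge X (X.map (SimplexCategory.σ j).op y) i = elemEdge X y i' :=
        elemEdge_map X _ y i i'.castSucc i'.succ (Fin.castSucc_lt_succ (i := i')).le hu hv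
      rw [hedge] at hdeg
      obtain ⟨z, hz⟩ := IH y i' hdeg
      refine ⟨X.map (SimplexCategory.σ j').op z, ?_⟩
      have hcomp : SimplexCategory.σ j ≫ SimplexCategory.σ i' =
          SimplexCategory.σ i ≫ SimplexCategory.σ j' := by
        have H : i' ≤ j' := by
          rw [Fin.le_def]
          simp only [hi', hj', Fin.coe_castPred, Fin.coe_pred]
          omega
        have h5 := SimplexCategory.σ_comp_σ H
        rw [hi', hj', Fin.castSucc_castPred, Fin.succ_pred] at h5
        exact h5.symm
      rw [hz, ← FunctorToTypes.map_comp_apply, ← op_comp, hcomp, op_comp,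
        FunctorToTypes.map_comp_apply]
    · -- i = j
      exact ⟨y, by rw [Fin.ext hij]⟩
    · -- j < i
      have hi0 : i ≠ 0 := by
        intro h; rw [h] at hij; simp only [Fin.val_zero] at hij; omega
      have hjL : j ≠ Fin.last _ := by
        intro h
        rw [h] at hij
        have := i.isLt
        simp only [Fin.val_last] at hij
        omega
      set i' := i.pred hi0 with hi'
      set j' := j.castPred hjL with hj'
      have hu : (SimplexCategory.σ j).toOrderHom i.castSucc = i'.castSucc := by
        apply Fin.ext
        rw [sigma_val]
        simp only [Fin.coe_castSucc, hi', Fin.coe_pred]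
        split_ifs <;> omega
      have hv : (SimplexCategory.σ j).toOrderHom i.succ = i'.succ := by
        apply Fin.ext
        rw [sigma_val]
        simp only [Fin.coe_castSucc, Fin.val_succ, hi', Fin.coe_pred]
        split_ifs <;> omega
      have hedge : elemEdge X (X.map (SimplexCategory.σ j).op y) i = elemEdge X y i' :=
        elemEdge_map X _ y i i'.castSucc i'.succ (Fin.castSucc_lt_succ (i := i')).le hu hv
      rw [hedge] at hdeg
      obtain ⟨z, hz⟩ := IH y i' hdeg
      refine ⟨X.map (SimplexCategory.σ j').op z, ?_⟩
      have hcomp : SimplexCategory.σ j ≫ SimplexCategory.σ i' =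
          SimplexCategory.σ i ≫ SimplexCategory.σ j' := by
        have H : j' ≤ i' := by
          rw [Fin.le_def]
          simp only [hi', hj', Fin.coe_castPred, Fin.coe_pred]
          omega
        have h5 := SimplexCategory.σ_comp_σ H
        rw [hi', hj', Fin.castSucc_castPred, Fin.succ_pred] at h5
        exact h5
      rw [hz, ← FunctorToTypes.map_comp_apply, ← op_comp, hcomp, op_comp,
        FunctorToTypes.map_comp_apply]

/-- If a simplex is degenerate, one of its elementary edges is degenerate. -/
lemma deg_edge_of_deg (X : SSet.{u}) (p : ℕ) (x : X _⦋p⦌) (hx : SDeg X x) :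
    ∃ i : Fin p, SDeg X (elemEdge X x i) := by
  cases p with
  | zero => exact absurd hx (by exact id)
  | succ n =>
    obtain ⟨j, y, rfl⟩ := hx
    refine ⟨j, ?_⟩
    have hu : (SimplexCategory.σ j).toOrderHom j.castSucc = j := by
      apply Fin.ext
      rw [sigma_val]
      simp only [Fin.coe_castSucc]
      split_ifs <;> omega
    have hv : (SimplexCategory.σ j).toOrderHom j.succ = j := by
      apply Fin.ext
      rw [sigma_val]
      simp only [Fin.val_succ]
      split_ifs <;> omega
    rw [elemEdge_map X _ y j j j le_rfl hu hv]
    exact const_edge_deg X y j le_rfl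

/-- Equivalent characterizations of regularity: (i) `X` is regular; (ii) all elementary
edges of non-degenerate simplices are non-degenerate; (iii) a simplex is non-degenerate
iff all its elementary edges are non-degenerate. -/
theorem stmt_6 (X : SSet.{u}) :
    (SReg X ↔
      ∀ (p : ℕ) (x : X _⦋p⦌), ¬ SDeg X x → ∀ i : Fin p, ¬ SDeg X (elemEdge X x i)) ∧
    ((∀ (p : ℕ) (x : X _⦋p⦌), ¬ SDeg X x → ∀ i : Fin p, ¬ SDeg X (elemEdge X x i)) ↔
      ∀ (p : ℕ) (x : X _⦋p⦌), ¬ SDeg X x ↔ ∀ i : Fin p, ¬ SDeg X (elemEdge X x i)) := by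
  constructor
  · constructor
    · intro hreg p x hx i hdeg
      cases p with
      | zero => exact i.elim0
      | succ n =>
        obtain ⟨y, hy⟩ := hreg n x i hdeg
        exact hx ⟨i, y, hy⟩
    · intro h2
      exact key_lemma X h2
  · constructor
    · intro h2 p x
      constructor
      · exact h2 p x
      · intro hall hx
        obtain ⟨i, hi⟩ := deg_edge_of_deg X p x hx
        exact hall i hi
    · intro h3 p x hx
      exact (h3 p x).mp hx
end

section
/- Let X be a regular simplicial set and let f be a p-simplex of the internal hom Hom(Δ^n, X) (i.e. a simplicial map f : Δ^p × Δ^n → X) which is k-almost degenerate for some 0 ≤ k ≤ p−1. Then there exists a (p−1)-simplex g of Hom(Δ^n, X) with f = s_k(g). In particular, every almost-degenerate simplex of Hom(Δ^n, X) is degenerate. -/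
open CategoryTheory Simplicial MonoidalCategory SSet Limits

universe u v

/-- The internal hom of simplicial sets: its `p`-simplices are the
simplicial maps `Δ[p] ⊗ U ⟶ X`. -/
noncomputable def sHom (U X : SSet.{u}) : SSet.{u} where
  obj m := SSet.stdSimplex.obj m.unop ⊗ U ⟶ X
  map φ := TypeCat.ofHom (fun f => (SSet.stdSimplex.map φ.unop ▷ U) ≫ f)
  map_id m := ConcreteCategory.hom_ext _ _ fun f => by
    simp; erw [CategoryTheory.Functor.map_id, MonoidalCategory.id_whiskerRight, Category.id_comp]
  map_comp φ ψ := ConcreteCategory.hom_ext _ _ fun f => by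
    simp; erw [CategoryTheory.Functor.map_comp, MonoidalCategory.comp_whiskerRight, Category.assoc]

/-- A `p`-simplex `f : Δ[p] ⊗ Δ[n] ⟶ X` of `Hom(Δ[n], X)` is `k`-almost degenerate
if for every `0 ≤ j ≤ n` the image under `f` of the edge from `(k, j)` to `(k+1, j)`
is a degenerate `1`-simplex of `X`. -/
def AlmostDegAt (X : SSet.{u}) (n p : ℕ) (f : Δ[p + 1] ⊗ Δ[n] ⟶ X) (k : Fin (p + 1)) : Prop :=
  ∀ j : Fin (n + 1),
    SDeg X (f.app (Opposite.op ⦋1⦌)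
      ((SSet.stdSimplex.objEquiv (n := ⦋p + 1⦌) (m := Opposite.op ⦋1⦌)).symm
          (SimplexCategory.mkOfLe k.castSucc k.succ (Fin.castSucc_lt_succ (i := k)).le),
       (SSet.stdSimplex.objEquiv (n := ⦋n⦌) (m := Opposite.op ⦋1⦌)).symm
          (SimplexCategory.const ⦋1⦌ ⦋n⦌ j)))

open SimplexCategory Opposite

namespace Stmt13

variable {X : SSet.{u}} {a b : ℕ}

def pr (f : Δ[a] ⊗ Δ[b] ⟶ X) {ℓ : ℕ} (α : (⦋ℓ⦌ : SimplexCategory) ⟶ ⦋a⦌)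
    (β : (⦋ℓ⦌ : SimplexCategory) ⟶ ⦋b⦌) : X _⦋ℓ⦌ :=
  f.app (op ⦋ℓ⦌) ((stdSimplex.objEquiv (n := ⦋a⦌) (m := op ⦋ℓ⦌)).symm α,
    (stdSimplex.objEquiv (n := ⦋b⦌) (m := op ⦋ℓ⦌)).symm β)

lemma pr_natural (f : Δ[a] ⊗ Δ[b] ⟶ X) {ℓ ℓ' : ℕ} (φ : (⦋ℓ'⦌ : SimplexCategory) ⟶ ⦋ℓ⦌)
    (α : (⦋ℓ⦌ : SimplexCategory) ⟶ ⦋a⦌) (β : (⦋ℓ⦌ : SimplexCategory) ⟶ ⦋b⦌) :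
    X.map φ.op (pr f α β) = pr f (φ ≫ α) (φ ≫ β) := by
  have h := NatTrans.naturality_apply f φ.op (show (Δ[a] ⊗ Δ[b]).obj (op ⦋ℓ⦌) from
    ((stdSimplex.objEquiv (n := ⦋a⦌) (m := op ⦋ℓ⦌)).symm α, (stdSimplex.objEquiv (n := ⦋b⦌) (m := op ⦋ℓ⦌)).symm β))
  dsimp only at h
  dsimp [pr]
  erw [← h]
  rfl

lemma homext (f g : Δ[a] ⊗ Δ[b] ⟶ X)
    (h : ∀ (ℓ : ℕ) (α : (⦋ℓ⦌ : SimplexCategory) ⟶ ⦋a⦌) (β : (⦋ℓ⦌ : SimplexCategory) ⟶ ⦋b⦌),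
      pr f α β = pr g α β) : f = g := by
  apply NatTrans.ext
  funext m
  ext x
  obtain ⟨m⟩ := m
  induction m using SimplexCategory.rec with
  | mk ℓ =>
    have := h ℓ (stdSimplex.objEquiv (n := ⦋a⦌) (m := op ⦋ℓ⦌) x.1) (stdSimplex.objEquiv (n := ⦋b⦌) (m := op ⦋ℓ⦌) x.2)
    simp [pr] at this
    exact this

lemma pr_comp (f : Δ[a] ⊗ Δ[b] ⟶ X) {a' : ℕ} (φ : (⦋a'⦌ : SimplexCategory) ⟶ ⦋a⦌)
    {ℓ : ℕ} (α : (⦋ℓ⦌ : SimplexCategory) ⟶ ⦋a'⦌) (β : (⦋ℓ⦌ : SimplexCategory) ⟶ ⦋b⦌) :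
    pr ((SSet.stdSimplex.map φ ▷ Δ[b]) ≫ f) α β = pr f (α ≫ φ) β := rfl

def tau {p : ℕ} (k : Fin (p+1)) : (⦋p+1⦌ : SimplexCategory) ⟶ ⦋p+1⦌ :=
  SimplexCategory.mkHom
    { toFun := fun j => ⟨if j.val = k.val+1 then k.val else j.val, by
        have := j.isLt; have := k.isLt; split <;> omega⟩
      monotone' := by
        intro j j' h
        have hj := j.isLt; have hj' := j'.isLt; have hk := k.isLt
        simp only [Fin.le_def] at h ⊢
        split_ifs <;> omega }

lemma tau_apply {p : ℕ} (k : Fin (p+1)) (j : Fin (p+2)) :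
    ((tau k).toOrderHom j).val = if j.val = k.val+1 then k.val else j.val := rfl

lemma tau_eq {p : ℕ} (k : Fin (p+1)) : σ k ≫ δ k.succ = tau k := by
  apply SimplexCategory.Hom.ext'
  apply OrderHom.ext
  funext j
  ext
  rw [tau_apply]
  simp only [comp_toOrderHom, OrderHom.comp_coe, Function.comp_apply]
  dsimp [SimplexCategory.σ, SimplexCategory.δ, Fin.predAbove, Fin.succAbove,
    Fin.succAboveOrderEmb]
  simp only [OrderEmbedding.toOrderHom_coe, OrderEmbedding.coe_ofStrictMono, Fin.succAbove,
    Fin.predAboveOrderHom_coe, Fin.predAbove]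
  have hj := j.isLt
  simp only [apply_dite Fin.val, apply_ite Fin.val, Fin.lt_def, Fin.coe_castSucc,
    Fin.val_succ, Fin.coe_pred, Fin.coe_castPred]
  split_ifs <;> omega

lemma delta_val {m : ℕ} (d : Fin (m+2)) (j : Fin (m+1)) :
    @Fin.val (m+2) (((δ d).toOrderHom) j) = if j.val < d.val then j.val else j.val + 1 := by
  dsimp [SimplexCategory.δ, Fin.succAbove, Fin.succAboveOrderEmb]
  simp only [OrderEmbedding.toOrderHom_coe, OrderEmbedding.coe_ofStrictMono, Fin.succAbove]
  simp only [apply_ite Fin.val, Fin.lt_def, Fin.coe_castSucc, Fin.val_succ]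

lemma mkOfLe_val {m : ℕ} (u v : Fin (m+1)) (h : u ≤ v) (j : Fin 2) :
    ((SimplexCategory.mkOfLe u v h).toOrderHom j).val = if j.val = 0 then u.val else v.val := by
  fin_cases j <;> rfl

end Stmt13



lemma Stmt13.key (X : SSet.{u}) (hX : SReg X) {n p : ℕ} (f : Δ[p+1] ⊗ Δ[n] ⟶ X) (k : Fin (p+1))
    (hf : AlmostDegAt X n p f k) (c : ℕ) :
    ∀ (ℓ : ℕ) (α : (⦋ℓ⦌ : SimplexCategory) ⟶ ⦋p+1⦌) (β : (⦋ℓ⦌ : SimplexCategory) ⟶ ⦋n⦌),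
      (Finset.univ.filter (fun i => α.toOrderHom i = k.succ)).card = c →
      pr f (α ≫ tau k) β = pr f α β := by
  induction c with
  | zero =>
    intro ℓ α β hc
    have h0 : ∀ j, α.toOrderHom j ≠ k.succ := by
      intro j hj
      have h1 : (Finset.univ.filter (fun i => α.toOrderHom i = k.succ)).Nonempty :=
        ⟨j, Finset.mem_filter.mpr ⟨Finset.mem_univ _, hj⟩⟩
      rw [← Finset.card_pos, hc] at h1
      exact lt_irrefl 0 h1
    have : α ≫ tau k = α := by
      apply SimplexCategory.Hom.ext'
      apply OrderHom.ext
      funext j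
      ext
      simp only [comp_toOrderHom, OrderHom.comp_coe, Function.comp_apply]
      rw [tau_apply]
      have h2 : ¬ ((α.toOrderHom j).val = k.val + 1) := by
        intro he
        exact h0 j (Fin.ext he)
      rw [if_neg h2]
    rw [this]
  | succ c ih =>
    intro ℓ α β hc
    classical
    have hne : (Finset.univ.filter (fun j => α.toOrderHom j = k.succ)).Nonempty :=
      Finset.card_pos.mp (by rw [hc]; omega)
    obtain ⟨i, him, hmin⟩ : ∃ i : Fin (ℓ+1), (α.toOrderHom i = k.succ) ∧
        ∀ j : Fin (ℓ+1), α.toOrderHom j = k.succ → i ≤ j := by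
      refine ⟨(Finset.univ.filter (fun j => α.toOrderHom j = k.succ)).min' hne, ?_, ?_⟩
      · exact (Finset.mem_filter.mp (Finset.min'_mem _ hne)).2
      · intro j hj
        exact Finset.min'_le (Finset.univ.filter (fun j => α.toOrderHom j = k.succ)) j
          (Finset.mem_filter.mpr ⟨Finset.mem_univ _, hj⟩)
    have hil : i.val < ℓ + 1 := i.isLt
    have hAiv : (α.toOrderHom i).val = k.val + 1 := by rw [him]; rfl
    have hminv : ∀ x (hx : x < ℓ+1), (α.toOrderHom ⟨x,hx⟩).val = k.val+1 → i.val ≤ x :=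
      fun x hx he => hmin _ (Fin.ext he)
    obtain ⟨A', hA'eq, hA'lt, hA'mono⟩ :
        ∃ A' : ℕ → ℕ, (∀ x (hx : x < ℓ+1), A' x = (α.toOrderHom ⟨x, hx⟩).val) ∧
          (∀ x, A' x < p+2) ∧ (∀ x y, x ≤ y → A' x ≤ A' y) := by
      refine ⟨fun x => if h : x < ℓ + 1 then (α.toOrderHom ⟨x, h⟩).val
          else (α.toOrderHom ⟨ℓ, Nat.lt_succ_self ℓ⟩).val, ?_, ?_, ?_⟩
      · intro x hx
        exact dif_pos hx
      · intro x
        dsimp only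
        split
        · exact (α.toOrderHom _).isLt
        · exact (α.toOrderHom _).isLt
      · intro x y hxy
        dsimp only
        split_ifs with h1 h2 h2
        · exact α.toOrderHom.monotone (show x ≤ y from hxy)
        · exact α.toOrderHom.monotone (show x ≤ ℓ by omega)
        · omega
        · exact le_refl _
    obtain ⟨B', hB'eq, hB'lt, hB'mono⟩ :
        ∃ B' : ℕ → ℕ, (∀ x (hx : x < ℓ+1), B' x = (β.toOrderHom ⟨x, hx⟩).val) ∧
          (∀ x, B' x < n+1) ∧ (∀ x y, x ≤ y → B' x ≤ B' y) := by
      refine ⟨fun x => if h : x < ℓ + 1 then (β.toOrderHom ⟨x, h⟩).val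
          else (β.toOrderHom ⟨ℓ, Nat.lt_succ_self ℓ⟩).val, ?_, ?_, ?_⟩
      · intro x hx
        exact dif_pos hx
      · intro x
        dsimp only
        split
        · exact (β.toOrderHom _).isLt
        · exact (β.toOrderHom _).isLt
      · intro x y hxy
        dsimp only
        split_ifs with h1 h2 h2
        · exact β.toOrderHom.monotone (show x ≤ y from hxy)
        · exact β.toOrderHom.monotone (show x ≤ ℓ by omega)
        · omega
        · exact le_refl _
    have hA'i : A' i.val = k.val + 1 := by rw [hA'eq i.val hil]; exact hAiv
    have hlt : ∀ x, x < i.val → A' x ≤ k.val := by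
      intro x hx
      have hxl : x < ℓ + 1 := by omega
      have hne' : ¬ ((α.toOrderHom ⟨x, hxl⟩).val = k.val + 1) := by
        intro he
        have := hminv x hxl he
        omega
      have hle : A' x ≤ A' i.val := hA'mono _ _ (by omega)
      rw [hA'eq x hxl] at hle ⊢
      omega
    have hge : ∀ x, i.val ≤ x → k.val ≤ A' x := by
      intro x hx
      have := hA'mono i.val x hx
      omega
    -- the order homs
    obtain ⟨α'f, hα'v⟩ : ∃ g : Fin (ℓ+2) →o Fin (p+2), ∀ e : Fin (ℓ+2), (g e).val =
        (if e.val < i.val then A' e.val else if e.val = i.val then k.val else A' (e.val - 1)) := by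
      have hkp : k.val < p + 1 := k.isLt
      refine ⟨⟨fun e => ⟨if e.val < i.val then A' e.val else if e.val = i.val then k.val
          else A' (e.val - 1), by split_ifs <;> first | (exact hA'lt _) | omega⟩, ?_⟩, fun e => rfl⟩
      intro u v huv
      have hu := u.isLt; have hv := v.isLt
      simp only [Fin.le_def] at huv
      refine Fin.mk_le_mk.mpr ?_
      split_ifs <;>
        first
        | omega
        | exact hA'mono _ _ (by omega)
        | exact hlt _ (by omega)
        | exact hge _ (by omega)
        | exact absurd huv (by omega)
    obtain ⟨β'f, hβ'v⟩ : ∃ g : Fin (ℓ+2) →o Fin (n+1), ∀ e : Fin (ℓ+2), (g e).val =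
        (if e.val ≤ i.val then B' e.val else B' (e.val - 1)) := by
      refine ⟨⟨fun e => ⟨if e.val ≤ i.val then B' e.val else B' (e.val - 1),
          by split_ifs <;> exact hB'lt _⟩, ?_⟩, fun e => rfl⟩
      intro u v huv
      simp only [Fin.le_def] at huv
      refine Fin.mk_le_mk.mpr ?_
      split_ifs <;>
        first
        | exact hB'mono _ _ (by omega)
        | exact absurd huv (by omega)
    obtain ⟨α₁f, hα₁v⟩ : ∃ g : Fin (ℓ+1) →o Fin (p+2), ∀ e : Fin (ℓ+1), (g e).val =
        (if e.val = i.val then k.val else A' e.val) := by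
      have hkp : k.val < p + 1 := k.isLt
      refine ⟨⟨fun e => ⟨if e.val = i.val then k.val else A' e.val,
          by split_ifs <;> first | (exact hA'lt _) | omega⟩, ?_⟩, fun e => rfl⟩
      intro u v huv
      have hu := u.isLt; have hv := v.isLt
      simp only [Fin.le_def] at huv
      refine Fin.mk_le_mk.mpr ?_
      split_ifs <;>
        first
        | omega
        | exact hA'mono _ _ (by omega)
        | exact hlt _ (by omega)
        | exact hge _ (by omega)
        | exact absurd huv (by omega)
    -- composition identities
    have hδ1 : δ i.castSucc ≫ (SimplexCategory.Hom.mk (a := ⦋ℓ+1⦌) (b := ⦋p+1⦌) α'f) = α := by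
      apply SimplexCategory.Hom.ext'
      apply OrderHom.ext
      funext j
      have hjl : j.val < ℓ + 1 := j.isLt
      have hAj : (α.toOrderHom j).val = A' j.val := (hA'eq j.val hjl).symm
      refine Fin.ext ?_
      show (α'f ((δ i.castSucc).toOrderHom j)).val = (α.toOrderHom j).val
      rw [hα'v, delta_val, hAj]
      simp only [Fin.coe_castSucc]
      split_ifs <;> first | rfl | (exfalso; omega) | (congr 1; omega)
    have hδ2 : δ i.succ ≫ (SimplexCategory.Hom.mk (a := ⦋ℓ+1⦌) (b := ⦋p+1⦌) α'f)
        = (SimplexCategory.Hom.mk (a := ⦋ℓ⦌) (b := ⦋p+1⦌) α₁f) := by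
      apply SimplexCategory.Hom.ext'
      apply OrderHom.ext
      funext j
      refine Fin.ext ?_
      show (α'f ((δ i.succ).toOrderHom j)).val = (α₁f j).val
      rw [hα'v, hα₁v, delta_val]
      simp only [Fin.val_succ]
      split_ifs <;> first | rfl | (exfalso; omega) | (congr 1; omega)
    have hδβ1 : δ i.castSucc ≫ (SimplexCategory.Hom.mk (a := ⦋ℓ+1⦌) (b := ⦋n⦌) β'f) = β := by
      apply SimplexCategory.Hom.ext'
      apply OrderHom.ext
      funext j
      have hjl : j.val < ℓ + 1 := j.isLt
      have hBj : (β.toOrderHom j).val = B' j.val := (hB'eq j.val hjl).symm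
      refine Fin.ext ?_
      show (β'f ((δ i.castSucc).toOrderHom j)).val = (β.toOrderHom j).val
      rw [hβ'v, delta_val, hBj]
      simp only [Fin.coe_castSucc]
      split_ifs <;> first | rfl | (exfalso; omega) | (congr 1; omega)
    have hδβ2 : δ i.succ ≫ (SimplexCategory.Hom.mk (a := ⦋ℓ+1⦌) (b := ⦋n⦌) β'f) = β := by
      apply SimplexCategory.Hom.ext'
      apply OrderHom.ext
      funext j
      have hjl : j.val < ℓ + 1 := j.isLt
      have hBj : (β.toOrderHom j).val = B' j.val := (hB'eq j.val hjl).symm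
      refine Fin.ext ?_
      show (β'f ((δ i.succ).toOrderHom j)).val = (β.toOrderHom j).val
      rw [hβ'v, delta_val, hBj]
      simp only [Fin.val_succ]
      split_ifs <;> first | rfl | (exfalso; omega) | (congr 1; omega)
    have hedge : mkOfLe i.castSucc i.succ (Fin.castSucc_lt_succ (i := i)).le ≫
        (SimplexCategory.Hom.mk (a := ⦋ℓ+1⦌) (b := ⦋p+1⦌) α'f)
          = mkOfLe k.castSucc k.succ (Fin.castSucc_lt_succ (i := k)).le := by
      apply SimplexCategory.Hom.ext'
      apply OrderHom.ext
      funext j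
      fin_cases j
      · refine Fin.ext ?_
        show (α'f i.castSucc).val = k.val
        rw [hα'v]
        simp [Fin.coe_castSucc]
      · refine Fin.ext ?_
        show (α'f i.succ).val = k.val + 1
        rw [hα'v]
        simp only [Fin.val_succ]
        rw [if_neg (by omega), if_neg (by omega),
          show i.val + 1 - 1 = i.val from rfl, hA'i]
    have hconst : mkOfLe i.castSucc i.succ (Fin.castSucc_lt_succ (i := i)).le ≫
        (SimplexCategory.Hom.mk (a := ⦋ℓ+1⦌) (b := ⦋n⦌) β'f)
          = SimplexCategory.const ⦋1⦌ ⦋n⦌ (β.toOrderHom i) := by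
      apply SimplexCategory.Hom.ext'
      apply OrderHom.ext
      funext j
      have hBi : (β.toOrderHom i).val = B' i.val := (hB'eq i.val hil).symm
      fin_cases j
      · refine Fin.ext ?_
        show (β'f i.castSucc).val = (β.toOrderHom i).val
        rw [hβ'v, hBi]
        simp [Fin.coe_castSucc]
      · refine Fin.ext ?_
        show (β'f i.succ).val = (β.toOrderHom i).val
        rw [hβ'v, hBi]
        simp only [Fin.val_succ]
        rw [if_neg (by omega), show i.val + 1 - 1 = i.val from rfl]
    -- the degenerate edge
    have hE : elemEdge X (pr f ((SimplexCategory.Hom.mk (a := ⦋ℓ+1⦌) (b := ⦋p+1⦌) α'f)) ((SimplexCategory.Hom.mk (a := ⦋ℓ+1⦌) (b := ⦋n⦌) β'f))) i =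
        pr f (mkOfLe k.castSucc k.succ (Fin.castSucc_lt_succ (i := k)).le)
          (SimplexCategory.const ⦋1⦌ ⦋n⦌ (β.toOrderHom i)) := by
      show X.map (mkOfLe i.castSucc i.succ (Fin.castSucc_lt_succ (i := i)).le).op _ = _
      rw [pr_natural, hedge, hconst]
    have hdeg : SDeg X (elemEdge X
        (pr f ((SimplexCategory.Hom.mk (a := ⦋ℓ+1⦌) (b := ⦋p+1⦌) α'f)) ((SimplexCategory.Hom.mk (a := ⦋ℓ+1⦌) (b := ⦋n⦌) β'f))) i) := by
      rw [hE]
      exact hf (β.toOrderHom i)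
    obtain ⟨y, hy⟩ := hX ℓ (pr f ((SimplexCategory.Hom.mk (a := ⦋ℓ+1⦌) (b := ⦋p+1⦌) α'f)) ((SimplexCategory.Hom.mk (a := ⦋ℓ+1⦌) (b := ⦋n⦌) β'f))) i hdeg
    have e1 : pr f α β = y := by
      have h1 := pr_natural f (δ i.castSucc) ((SimplexCategory.Hom.mk (a := ⦋ℓ+1⦌) (b := ⦋p+1⦌) α'f))
        ((SimplexCategory.Hom.mk (a := ⦋ℓ+1⦌) (b := ⦋n⦌) β'f))
      rw [hδ1, hδβ1] at h1
      rw [← h1, hy, ← FunctorToTypes.map_comp_apply, ← op_comp, δ_comp_σ_self, op_id,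
        FunctorToTypes.map_id_apply]
    have e2 : pr f ((SimplexCategory.Hom.mk (a := ⦋ℓ⦌) (b := ⦋p+1⦌) α₁f)) β = y := by
      have h1 := pr_natural f (δ i.succ) ((SimplexCategory.Hom.mk (a := ⦋ℓ+1⦌) (b := ⦋p+1⦌) α'f))
        ((SimplexCategory.Hom.mk (a := ⦋ℓ+1⦌) (b := ⦋n⦌) β'f))
      rw [hδ2, hδβ2] at h1
      rw [← h1, hy, ← FunctorToTypes.map_comp_apply, ← op_comp, δ_comp_σ_succ, op_id,
        FunctorToTypes.map_id_apply]
    -- counting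
    have hα₁j : ∀ j : Fin (ℓ+1),
        (((SimplexCategory.Hom.mk (a := ⦋ℓ⦌) (b := ⦋p+1⦌) α₁f) : (⦋ℓ⦌ : SimplexCategory) ⟶ ⦋p+1⦌).toOrderHom j = k.succ) ↔
          (j ≠ i ∧ α.toOrderHom j = k.succ) := by
      intro j
      have hjl : j.val < ℓ + 1 := j.isLt
      constructor
      · intro hj
        have hv : (α₁f j).val = k.val + 1 := congrArg Fin.val hj
        rw [hα₁v] at hv
        by_cases hji : j.val = i.val
        · rw [if_pos hji] at hv; omega
        · rw [if_neg hji, hA'eq j.val hjl] at hv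
          exact ⟨fun he => hji (by rw [he]), Fin.ext hv⟩
      · rintro ⟨hji, hj⟩
        have hv : (α.toOrderHom j).val = k.val + 1 := congrArg Fin.val hj
        refine Fin.ext ?_
        show (α₁f j).val = k.val + 1
        rw [hα₁v, if_neg (fun h => hji (Fin.ext h)), hA'eq j.val hjl]
        exact hv
    have hcnt : (Finset.univ.filter (fun j =>
        ((SimplexCategory.Hom.mk (a := ⦋ℓ⦌) (b := ⦋p+1⦌) α₁f) : (⦋ℓ⦌ : SimplexCategory) ⟶ ⦋p+1⦌).toOrderHom j
          = k.succ)).card = c := by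
      have hi_mem : i ∈ Finset.univ.filter (fun j => α.toOrderHom j = k.succ) :=
        Finset.mem_filter.mpr ⟨Finset.mem_univ _, him⟩
      have hsub : Finset.univ.filter (fun j =>
          ((SimplexCategory.Hom.mk (a := ⦋ℓ⦌) (b := ⦋p+1⦌) α₁f) : (⦋ℓ⦌ : SimplexCategory) ⟶ ⦋p+1⦌).toOrderHom j = k.succ)
          = (Finset.univ.filter (fun j => α.toOrderHom j = k.succ)).erase i := by
        ext j
        simp only [Finset.mem_filter, Finset.mem_erase, Finset.mem_univ, true_and, hα₁j j]
        try tauto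
      rw [hsub, Finset.card_erase_of_mem hi_mem, hc]
      omega
    -- change under tau
    have heq : (SimplexCategory.Hom.mk (a := ⦋ℓ⦌) (b := ⦋p+1⦌) α₁f) ≫ tau k = α ≫ tau k := by
      apply SimplexCategory.Hom.ext'
      apply OrderHom.ext
      funext j
      have hjl : j.val < ℓ + 1 := j.isLt
      have hAj : @Fin.val (p+2) (α.toOrderHom j) = A' j.val := (hA'eq j.val hjl).symm
      refine Fin.ext ?_
      show ((tau k).toOrderHom (α₁f j)).val = ((tau k).toOrderHom (α.toOrderHom j)).val
      rw [tau_apply, tau_apply, hα₁v, hAj]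
      by_cases hji : j.val = i.val
      · rw [if_pos hji, hji, hA'i]
        simp
      · rw [if_neg hji]
    calc pr f (α ≫ tau k) β
        = pr f ((SimplexCategory.Hom.mk (a := ⦋ℓ⦌) (b := ⦋p+1⦌) α₁f) ≫ tau k) β := by rw [heq]
      _ = pr f ((SimplexCategory.Hom.mk (a := ⦋ℓ⦌) (b := ⦋p+1⦌) α₁f)) β := ih ℓ ((SimplexCategory.Hom.mk (a := ⦋ℓ⦌) (b := ⦋p+1⦌) α₁f)) β hcnt
      _ = y := e2
      _ = pr f α β := e1.symm


/-- In `Hom(Δ[n], X)` with `X` regular, a `k`-almost degenerate simplex is a `k`-th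
degeneracy; in particular almost degenerate simplices are degenerate. -/
theorem stmt_13 (X : SSet.{u}) (hX : SReg X) (n p : ℕ) :
    (∀ (f : (sHom Δ[n] X) _⦋p + 1⦌) (k : Fin (p + 1)), AlmostDegAt X n p f k →
      ∃ g : (sHom Δ[n] X) _⦋p⦌, f = (sHom Δ[n] X).map (SimplexCategory.σ k).op g) ∧
    (∀ f : (sHom Δ[n] X) _⦋p + 1⦌, (∃ k, AlmostDegAt X n p f k) →
      SDeg (sHom Δ[n] X) f) := by
  have part1 : ∀ (f : (sHom Δ[n] X) _⦋p + 1⦌) (k : Fin (p + 1)), AlmostDegAt X n p f k →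
      ∃ g : (sHom Δ[n] X) _⦋p⦌, f = (sHom Δ[n] X).map (SimplexCategory.σ k).op g := by
    intro f k hf
    refine ⟨(sHom Δ[n] X).map (SimplexCategory.δ k.succ).op f, ?_⟩
    have h2 : (sHom Δ[n] X).map (SimplexCategory.σ k).op
          ((sHom Δ[n] X).map (SimplexCategory.δ k.succ).op f)
        = (sHom Δ[n] X).map (SimplexCategory.σ k ≫ SimplexCategory.δ k.succ).op f := by
      rw [← FunctorToTypes.map_comp_apply, ← op_comp]
    rw [h2, Stmt13.tau_eq]
    show f = (SSet.stdSimplex.map (Stmt13.tau k) ▷ Δ[n]) ≫ f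
    apply Stmt13.homext
    intro ℓ α β
    erw [Stmt13.pr_comp]
    exact (Stmt13.key X hX f k hf _ ℓ α β rfl).symm
  refine ⟨part1, ?_⟩
  rintro f ⟨k, hk⟩
  obtain ⟨g, hg⟩ := part1 f k hk
  exact ⟨k, g, hg⟩
end
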